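/- arXiv:1203.0874 — 5 statements merged into one kernel-verified Lean document; each statement's English description precedes it below -/
import Mathlib

section
/- Let α, β > 0 and let X = (X_t)_{t ≥ 0} be a non-trivial α-IDT process that is (α/β)-selfsimilar. Then X is strictly β-stable. -/
open MeasureTheory ProbabilityTheory

/-- Two processes (indexed by nonnegative real times) have the same finite-dimensional
distributions: for every finite family of nonnegative times, the laws of the corresponding
finite-dimensional marginals coincide. -/
def HasSameFDD {Ω Ω' : Type*} [MeasurableSpace Ω] [MeasurableSpace Ω']
    (P : Measure Ω) (P' : Measure Ω') (X : ℝ → Ω → ℝ) (Y : ℝ → Ω' → ℝ) : Prop :=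
  ∀ (m : ℕ) (t : Fin m → ℝ), (∀ i, 0 ≤ t i) →
    Measure.map (fun ω i => X (t i) ω) P = Measure.map (fun ω i => Y (t i) ω) P'

/-- A process `X` is `α`-IDT if for every positive integer `n`, the time-rescaled process
`(X_{n^{1/α} t})_{t ≥ 0}` has the same finite-dimensional distributions as the sum of `n`
independent copies of `X` (realized canonically on the `n`-fold product space). -/
def IsAlphaIDT {Ω : Type*} [MeasurableSpace Ω] (P : Measure Ω) (α : ℝ)
    (X : ℝ → Ω → ℝ) : Prop :=
  ∀ n : ℕ, 0 < n →
    HasSameFDD P (Measure.pi fun _ : Fin n => P)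
      (fun t ω => X ((n : ℝ) ^ (1 / α) * t) ω)
      (fun t ω => ∑ j, X t (ω j))
/-- A process is `H`-selfsimilar: for every `a > 0`, `(X_{at})_{t ≥ 0}` has the same
finite-dimensional distributions as `(a^H X_t)_{t ≥ 0}`. -/
def IsSelfSimilar {Ω : Type*} [MeasurableSpace Ω] (P : Measure Ω) (H : ℝ)
    (X : ℝ → Ω → ℝ) : Prop :=
  ∀ a : ℝ, 0 < a → HasSameFDD P P (fun t ω => X (a * t) ω) (fun t ω => a ^ H * X t ω)

/-- A process is strictly `β`-stable: for every positive integer `n`, the sum of `n`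
independent copies of `X` (realized canonically on the `n`-fold product space) has the same
finite-dimensional distributions as `(n^{1/β} X_t)_{t ≥ 0}`. -/
def IsStrictlyStable {Ω : Type*} [MeasurableSpace Ω] (P : Measure Ω) (β : ℝ)
    (X : ℝ → Ω → ℝ) : Prop :=
  ∀ n : ℕ, 0 < n →
    HasSameFDD (Measure.pi fun _ : Fin n => P) P
      (fun t ω => ∑ j, X t (ω j))
      (fun t ω => (n : ℝ) ^ (1 / β) * X t ω)

/-- A process is non-trivial if at some nonnegative time it is not almost surely constant. -/
def IsNonTrivialProcess {Ω : Type*} [MeasurableSpace Ω] (P : Measure Ω)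
    (X : ℝ → Ω → ℝ) : Prop :=
  ∃ t : ℝ, 0 ≤ t ∧ ∀ c : ℝ, ¬ (X t =ᵐ[P] fun _ => c)

/-- a non-trivial `α`-IDT process which is `(α/β)`-selfsimilar is strictly
`β`-stable. -/
theorem stmt11 {Ω : Type*} [MeasurableSpace Ω] (P : Measure Ω) [IsProbabilityMeasure P]
    (α β : ℝ) (hα : 0 < α) (hβ : 0 < β) (X : ℝ → Ω → ℝ) (hXmeas : ∀ t, Measurable (X t))
    (hnt : IsNonTrivialProcess P X)
    (hIDT : IsAlphaIDT P α X)
    (hss : IsSelfSimilar P (α / β) X) :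
    IsStrictlyStable P β X := by
  intro n hn m t ht
  have hnpos : (0:ℝ) < n := by exact_mod_cast hn
  have ha : (0:ℝ) < (n:ℝ) ^ (1/α) := Real.rpow_pos_of_pos hnpos _
  have h1 := hIDT n hn m t ht
  have h2 := hss ((n:ℝ) ^ (1/α)) ha m t ht
  have key : ((n:ℝ) ^ (1/α)) ^ (α/β) = (n:ℝ) ^ (1/β) := by
    rw [← Real.rpow_mul hnpos.le]
    congr 1
    field_simp
  rw [← h1, h2]
  simp only [key]
end

section
/- Let α, β > 0 and let X = (X_t)_{t ≥ 0} be a non-trivial stochastically continuous α-IDT process that is strictly β-stable. Then X is (α/β)-selfsimilar. -/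
open MeasureTheory ProbabilityTheory

/-- A process is stochastically continuous (continuous in probability) on `[0,∞)`. -/
def StochasticallyContinuous {Ω : Type*} [MeasurableSpace Ω] (P : Measure Ω)
    (X : ℝ → Ω → ℝ) : Prop :=
  ∀ s : ℝ, 0 ≤ s → TendstoInMeasure P X (nhdsWithin s (Set.Ici 0)) (X s)
open Filter Topology
open scoped NNReal ENNReal BoundedContinuousFunction

namespace Stmt12Aux

private lemma measurable_scale (m : ℕ) (c : ℝ) :
    Measurable (fun v : Fin m → ℝ => fun i => c * v i) :=
  measurable_pi_lambda _ fun i => by fun_prop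

lemma map_scale {Ω : Type*} [MeasurableSpace Ω] (P : Measure Ω) {m : ℕ} (c : ℝ)
    (Y : Fin m → Ω → ℝ) (hY : ∀ i, Measurable (Y i)) :
    Measure.map (fun ω i => c * Y i ω) P
      = Measure.map (fun v : Fin m → ℝ => fun i => c * v i)
          (Measure.map (fun ω i => Y i ω) P) := by
  rw [Measure.map_map (measurable_scale m c) (measurable_pi_lambda _ hY)]
  rfl

lemma map_scale_scale {m : ℕ} (c d : ℝ) (μ : Measure (Fin m → ℝ)) :
    Measure.map (fun v : Fin m → ℝ => fun i => c * v i)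
      (Measure.map (fun v : Fin m → ℝ => fun i => d * v i) μ)
      = Measure.map (fun v : Fin m → ℝ => fun i => (c * d) * v i) μ := by
  rw [Measure.map_map (measurable_scale m c) (measurable_scale m d)]
  congr 1
  funext v
  funext i
  simp [Function.comp, mul_assoc]

lemma tendstoInMeasure_pi {m : ℕ} {Ω : Type*} [MeasurableSpace Ω] (P : Measure Ω)
    {F : ℕ → Ω → Fin m → ℝ} {G : Ω → Fin m → ℝ}
    (h : ∀ i, TendstoInMeasure P (fun k ω => F k ω i) atTop (fun ω => G ω i)) :
    TendstoInMeasure P F atTop G := by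
  intro ε hε
  have hsub : ∀ k, {x | ε ≤ edist (F k x) (G x)}
      ⊆ ⋃ i, {x | ε ≤ edist (F k x i) (G x i)} := by
    intro k x hx
    by_contra hc
    simp only [Set.mem_iUnion, Set.mem_setOf_eq, not_exists, not_le] at hc
    exact absurd (show edist (F k x) (G x) < ε by
      rw [edist_pi_def]; exact (Finset.sup_lt_iff hε).2 fun i _ => hc i) (not_lt.2 hx)
  have h0 : Tendsto (fun k => ∑ i, P {x | ε ≤ edist (F k x i) (G x i)}) atTop (𝓝 0) := by
    have := tendsto_finset_sum (Finset.univ : Finset (Fin m)) (fun i _ => h i ε hε)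
    simpa using this
  refine tendsto_of_tendsto_of_tendsto_of_le_of_le tendsto_const_nhds h0
    (fun k => zero_le) (fun k => ?_)
  exact (measure_mono (hsub k)).trans (measure_iUnion_fintype_le _ _)

lemma tendsto_lintegral_comp_of_tendstoInMeasure {Ω : Type*} [MeasurableSpace Ω]
    (P : Measure Ω) [IsProbabilityMeasure P] {m : ℕ}
    {F : ℕ → Ω → (Fin m → ℝ)} {G : Ω → (Fin m → ℝ)}
    (hF : ∀ k, Measurable (F k))
    (h : TendstoInMeasure P F atTop G) (f : (Fin m → ℝ) →ᵇ ℝ≥0) :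
    Tendsto (fun k => ∫⁻ ω, f (F k ω) ∂P) atTop (𝓝 (∫⁻ ω, f (G ω) ∂P)) := by
  refine tendsto_of_subseq_tendsto fun ns hns => ?_
  have h' : TendstoInMeasure P (fun n => F (ns n)) atTop G :=
    fun ε hε => (h ε hε).comp hns
  obtain ⟨ms, -, hms⟩ := h'.exists_seq_tendsto_ae
  refine ⟨ms, ?_⟩
  refine tendsto_lintegral_of_dominated_convergence (fun _ => (nndist 0 f : ℝ≥0∞))
    (fun k => ?_) (fun k => ae_of_all _ fun ω => ?_) ?_ ?_
  · exact (ENNReal.continuous_coe.comp f.continuous).measurable.comp (hF _)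
  · exact ENNReal.coe_le_coe.2 (f.apply_le_nndist_zero (F (ns (ms k)) ω))
  · rw [lintegral_const]
    exact ENNReal.mul_ne_top ENNReal.coe_ne_top (measure_ne_top _ _)
  · filter_upwards [hms] with ω hω
    exact (ENNReal.continuous_coe.tendsto _).comp ((f.continuous.tendsto _).comp hω)

end Stmt12Aux

open Stmt12Aux

/-- a non-trivial stochastically continuous `α`-IDT process which is strictly
`β`-stable is `(α/β)`-selfsimilar. -/
theorem stmt12 {Ω : Type*} [MeasurableSpace Ω] (P : Measure Ω) [IsProbabilityMeasure P]
    (α β : ℝ) (hα : 0 < α) (hβ : 0 < β) (X : ℝ → Ω → ℝ) (hXmeas : ∀ t, Measurable (X t))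
    (hnt : IsNonTrivialProcess P X)
    (hcont : StochasticallyContinuous P X)
    (hIDT : IsAlphaIDT P α X)
    (hstable : IsStrictlyStable P β X) :
    IsSelfSimilar P (α / β) X := by
  classical
  -- Step 1: combine IDT and stability
  have key : ∀ n : ℕ, 0 < n → ∀ (m : ℕ) (t : Fin m → ℝ), (∀ i, 0 ≤ t i) →
      Measure.map (fun ω i => X ((n : ℝ) ^ (1/α) * t i) ω) P
        = Measure.map (fun ω i => (n : ℝ) ^ (1/β) * X (t i) ω) P :=
    fun n hn m t ht => (hIDT n hn m t ht).trans (hstable n hn m t ht)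
  -- Step 2: rational scaling
  have hrat : ∀ (p r : ℕ), 0 < p → 0 < r → ∀ (m : ℕ) (t : Fin m → ℝ), (∀ i, 0 ≤ t i) →
      Measure.map (fun ω i => X (((p:ℝ)/(r:ℝ)) ^ (1/α) * t i) ω) P
        = Measure.map (fun ω i => ((p:ℝ)/(r:ℝ)) ^ (1/β) * X (t i) ω) P := by
    intro p r hp hr m t ht
    have hp0 : (0:ℝ) < p := by exact_mod_cast hp
    have hr0 : (0:ℝ) < r := by exact_mod_cast hr
    have hrα : (0:ℝ) < (r:ℝ) ^ (1/α) := Real.rpow_pos_of_pos hr0 _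
    have hrβ : (0:ℝ) < (r:ℝ) ^ (1/β) := Real.rpow_pos_of_pos hr0 _
    set s : Fin m → ℝ := fun i => ((r:ℝ) ^ (1/α))⁻¹ * t i with hs
    have hs_nonneg : ∀ i, 0 ≤ s i := fun i => mul_nonneg (inv_nonneg.2 hrα.le) (ht i)
    have hA := key r hr m s hs_nonneg
    have hts : ∀ i, (r:ℝ) ^ (1/α) * s i = t i := by
      intro i
      simp only [hs]
      field_simp
    simp only [hts] at hA
    rw [map_scale P ((r:ℝ) ^ (1/β)) (fun i => X (s i)) (fun i => hXmeas _)] at hA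
    have hν : Measure.map (fun ω i => X (s i) ω) P
        = Measure.map (fun v : Fin m → ℝ => fun i => ((r:ℝ) ^ (1/β))⁻¹ * v i)
            (Measure.map (fun ω i => X (t i) ω) P) := by
      rw [hA, map_scale_scale, inv_mul_cancel₀ hrβ.ne']
      simp only [one_mul]
      exact (Measure.map_id).symm
    have hB := key p hp m s hs_nonneg
    have hts2 : ∀ i, (p:ℝ) ^ (1/α) * s i = ((p:ℝ)/(r:ℝ)) ^ (1/α) * t i := by
      intro i
      simp only [hs]
      rw [Real.div_rpow hp0.le hr0.le]
      ring
    simp only [hts2] at hB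
    have hc : ((p:ℝ)/(r:ℝ)) ^ ((1:ℝ)/β) = (p:ℝ) ^ (1/β) * ((r:ℝ) ^ (1/β))⁻¹ := by
      rw [Real.div_rpow hp0.le hr0.le, div_eq_mul_inv]
    rw [hB, map_scale P ((p:ℝ) ^ (1/β)) (fun i => X (s i)) (fun i => hXmeas _), hν,
      map_scale_scale, hc,
      map_scale P ((p:ℝ) ^ (1/β) * ((r:ℝ) ^ (1/β))⁻¹) (fun i => X (t i)) (fun i => hXmeas _)]
  -- Step 3: limit argument
  intro a ha m t ht
  have haα : (0:ℝ) < a ^ α := Real.rpow_pos_of_pos ha α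
  have hex : ∀ k : ℕ, ∃ q : ℚ, a ^ α < (q:ℝ) ∧ (q:ℝ) < a ^ α + 1/((k:ℝ)+1) :=
    fun k => exists_rat_btwn (lt_add_of_pos_right _ (by positivity))
  choose q hq1 hq2 using hex
  have hcpos : ∀ k, (0:ℝ) < ((q k : ℚ) : ℝ) := fun k => haα.trans (hq1 k)
  have hctend : Tendsto (fun k => ((q k : ℚ) : ℝ)) atTop (𝓝 (a ^ α)) := by
    have h1 : Tendsto (fun k : ℕ => a ^ α + 1/((k:ℝ)+1)) atTop (𝓝 (a ^ α)) := by
      simpa using tendsto_const_nhds.add (tendsto_one_div_add_atTop_nhds_zero_nat (𝕜 := ℝ))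
    exact tendsto_of_tendsto_of_tendsto_of_le_of_le tendsto_const_nhds h1
      (fun k => (hq1 k).le) (fun k => (hq2 k).le)
  have hsc1 : Tendsto (fun k => ((q k : ℚ):ℝ) ^ (1/α)) atTop (𝓝 a) := by
    have hca : ContinuousAt (fun x : ℝ => x ^ ((1:ℝ)/α)) (a ^ α) :=
      Real.continuousAt_rpow_const _ _ (Or.inl haα.ne')
    have hval : (a ^ α) ^ ((1:ℝ)/α) = a := by
      rw [← Real.rpow_mul ha.le, mul_one_div, div_self hα.ne', Real.rpow_one]
    have := hca.tendsto.comp hctend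
    rwa [hval] at this
  have hsc2 : Tendsto (fun k => ((q k : ℚ):ℝ) ^ (1/β)) atTop (𝓝 (a ^ (α/β))) := by
    have hca : ContinuousAt (fun x : ℝ => x ^ ((1:ℝ)/β)) (a ^ α) :=
      Real.continuousAt_rpow_const _ _ (Or.inl haα.ne')
    have hval : (a ^ α) ^ ((1:ℝ)/β) = a ^ (α/β) := by
      rw [← Real.rpow_mul ha.le, mul_one_div]
    have := hca.tendsto.comp hctend
    rwa [hval] at this
  set F : ℕ → Ω → Fin m → ℝ := fun k ω i => X (((q k : ℚ):ℝ) ^ (1/α) * t i) ω with hF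
  set Fl : Ω → Fin m → ℝ := fun ω i => X (a * t i) ω with hFl
  set G : ℕ → Ω → Fin m → ℝ := fun k ω i => ((q k : ℚ):ℝ) ^ (1/β) * X (t i) ω with hG
  set Gl : Ω → Fin m → ℝ := fun ω i => a ^ (α/β) * X (t i) ω with hGl
  have hFm : ∀ k, Measurable (F k) := fun k => measurable_pi_lambda _ fun i => hXmeas _
  have hFlm : Measurable Fl := measurable_pi_lambda _ fun i => hXmeas _
  have hGm : ∀ k, Measurable (G k) :=
    fun k => measurable_pi_lambda _ fun i => (hXmeas _).const_mul _
  have hGlm : Measurable Gl := measurable_pi_lambda _ fun i => (hXmeas _).const_mul _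
  have hlaw : ∀ k, Measure.map (F k) P = Measure.map (G k) P := by
    intro k
    have hq0 : 0 < q k := by exact_mod_cast hcpos k
    have hnum : (0:ℤ) < (q k).num := Rat.num_pos.2 hq0
    have hrepr : ((q k : ℚ):ℝ) = (((q k).num.toNat : ℕ) : ℝ) / (((q k).den : ℕ) : ℝ) := by
      rw [Rat.cast_def]
      congr 1
      exact_mod_cast (Int.toNat_of_nonneg hnum.le).symm
    simp only [hF, hG, hrepr]
    exact hrat _ _ (by omega) (q k).pos m t ht
  have hFconv : TendstoInMeasure P F atTop Fl := by
    apply tendstoInMeasure_pi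
    intro i
    have htimei : Tendsto (fun k => ((q k : ℚ):ℝ) ^ (1/α) * t i) atTop
        (nhdsWithin (a * t i) (Set.Ici 0)) := by
      rw [tendsto_nhdsWithin_iff]
      exact ⟨hsc1.mul_const _, Eventually.of_forall fun k =>
        mul_nonneg (Real.rpow_nonneg (hcpos k).le _) (ht i)⟩
    exact fun ε hε => (hcont (a * t i) (mul_nonneg ha.le (ht i)) ε hε).comp htimei
  have hGconv : TendstoInMeasure P G atTop Gl := by
    apply tendstoInMeasure_of_tendsto_ae (fun k => (hGm k).aestronglyMeasurable)
    exact ae_of_all _ fun ω => tendsto_pi_nhds.2 fun i => hsc2.mul_const _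
  show Measure.map Fl P = Measure.map Gl P
  have i1 : IsProbabilityMeasure (Measure.map Fl P) :=
    Measure.isProbabilityMeasure_map hFlm.aemeasurable
  refine ext_of_forall_lintegral_eq_of_IsFiniteMeasure fun f => ?_
  have hfm : Measurable fun v : Fin m → ℝ => (f v : ℝ≥0∞) :=
    (ENNReal.continuous_coe.comp f.continuous).measurable
  rw [lintegral_map hfm hFlm, lintegral_map hfm hGlm]
  have h1 := tendsto_lintegral_comp_of_tendstoInMeasure P hFm hFconv f
  have h2 := tendsto_lintegral_comp_of_tendstoInMeasure P hGm hGconv f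
  have heq : ∀ k, ∫⁻ ω, (f (F k ω) : ℝ≥0∞) ∂P = ∫⁻ ω, (f (G k ω) : ℝ≥0∞) ∂P := by
    intro k
    rw [← lintegral_map hfm (hFm k), ← lintegral_map hfm (hGm k), hlaw k]
  exact tendsto_nhds_unique (Filter.Tendsto.congr heq h1) h2
end

section
/- Let α, β > 0 and let X = (X_t)_{t ≥ 0} be a non-trivial process that is strictly β-stable and (α/β)-selfsimilar. Then X is an α-IDT process. -/
open MeasureTheory ProbabilityTheory

/-- a non-trivial strictly `β`-stable and `(α/β)`-selfsimilar process is an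
`α`-IDT process. -/
theorem stmt13 {Ω : Type*} [MeasurableSpace Ω] (P : Measure Ω) [IsProbabilityMeasure P]
    (α β : ℝ) (hα : 0 < α) (hβ : 0 < β) (X : ℝ → Ω → ℝ) (hXmeas : ∀ t, Measurable (X t))
    (hnt : IsNonTrivialProcess P X)
    (hstable : IsStrictlyStable P β X)
    (hss : IsSelfSimilar P (α / β) X) :
    IsAlphaIDT P α X := by
  intro n hn m t ht
  have hnpos : (0 : ℝ) < (n : ℝ) := by exact_mod_cast hn
  have ha : (0 : ℝ) < (n : ℝ) ^ (1 / α) := Real.rpow_pos_of_pos hnpos _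
  have hpow : ((n : ℝ) ^ (1 / α)) ^ (α / β) = (n : ℝ) ^ (1 / β) := by
    rw [← Real.rpow_mul hnpos.le]
    congr 1
    field_simp
  have h1 := hss _ ha m t ht
  have h2 := hstable n hn m t ht
  rw [hpow] at h1
  rw [h2]
  exact h1
end

section
/- Let X = (X_t)_{t ≥ 0} be a stochastically continuous α-IDT process. Then for every b ∈ (0,1), every finite family of times t_1, …, t_m ≥ 0 and every θ_1, …, θ_m ∈ ℝ, the finite-dimensional characteristic functions factorize as E[exp(i Σ_{k=1}^m θ_k X_{t_k})] = E[exp(i Σ_{k=1}^m θ_k X_{b^{1/α} t_k})] · E[exp(i Σ_{k=1}^m θ_k X_{(1−b)^{1/α} t_k})]; in other words, X is temporally selfdecomposable, with b^{1/α}-residual whose finite-dimensional distributions are those of X rescaled in time by (1−b)^{1/α}. -/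
open MeasureTheory ProbabilityTheory

open Filter Topology

/-- Auxiliary: the complex exponential of `i` times a real linear combination. -/
noncomputable def cexpLin {m : ℕ} (θ : Fin m → ℝ) (y : Fin m → ℝ) : ℂ :=
  Complex.exp ((↑(∑ k, θ k * y k) : ℂ) * Complex.I)

lemma cexpLin_eq {m : ℕ} (θ : Fin m → ℝ) (y : Fin m → ℝ) :
    Complex.exp (Complex.I * ∑ k, (θ k : ℂ) * (y k : ℂ)) = cexpLin θ y := by
  unfold cexpLin; congr 1; push_cast; ring

lemma cexpLin_norm {m : ℕ} (θ : Fin m → ℝ) (y : Fin m → ℝ) : ‖cexpLin θ y‖ = 1 :=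
  Complex.norm_exp_ofReal_mul_I _

lemma cexpLin_continuous {m : ℕ} (θ : Fin m → ℝ) : Continuous (cexpLin θ) := by
  unfold cexpLin
  exact Complex.continuous_exp.comp
    ((Complex.continuous_ofReal.comp
      (continuous_finset_sum _ fun k _ => continuous_const.mul (continuous_apply k))).mul
      continuous_const)

/-- Auxiliary: the finite-dimensional characteristic function of the time-rescaled process. -/
noncomputable def charF {Ω : Type*} [MeasurableSpace Ω] (P : Measure Ω) (X : ℝ → Ω → ℝ)
    {m : ℕ} (t θ : Fin m → ℝ) (s : ℝ) : ℂ :=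
  ∫ ω, cexpLin θ (fun k => X (s * t k) ω) ∂P

lemma charF_eq {Ω : Type*} [MeasurableSpace Ω] (P : Measure Ω) (X : ℝ → Ω → ℝ)
    {m : ℕ} (t θ : Fin m → ℝ) (s : ℝ) :
    charF P X t θ s
      = ∫ ω, Complex.exp (Complex.I * ∑ k, (θ k : ℂ) * (X (s * t k) ω : ℂ)) ∂P := by
  unfold charF
  exact integral_congr_ae (Filter.Eventually.of_forall fun ω => (cexpLin_eq θ _).symm)

/-- Auxiliary: the IDT property implies `F(n^{1/α} s) = F(s)^n` for characteristic functions. -/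
lemma idt_pow {Ω : Type*} [MeasurableSpace Ω] (P : Measure Ω) [IsProbabilityMeasure P]
    (α : ℝ) (X : ℝ → Ω → ℝ) (hXmeas : ∀ t, Measurable (X t))
    (hIDT : IsAlphaIDT P α X) {m : ℕ} (t θ : Fin m → ℝ) (ht : ∀ i, 0 ≤ t i)
    (n : ℕ) (hn : 0 < n) (s : ℝ) (hs : 0 ≤ s) :
    charF P X t θ ((n : ℝ) ^ (1 / α) * s) = (charF P X t θ s) ^ n := by
  have hmap := hIDT n hn m (fun i => s * t i) (fun i => mul_nonneg hs (ht i))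
  have hg := cexpLin_continuous θ
  have hmeas1 : Measurable (fun ω (i : Fin m) => X ((n : ℝ) ^ (1 / α) * (s * t i)) ω) :=
    measurable_pi_lambda _ fun i => hXmeas _
  have hmeas2 : Measurable (fun (ω : Fin n → Ω) (i : Fin m) => ∑ j, X (s * t i) (ω j)) :=
    measurable_pi_lambda _ fun i =>
      Finset.measurable_sum _ fun j _ => (hXmeas _).comp (measurable_pi_apply j)
  letI : MeasureSpace Ω := ⟨P⟩
  haveI : SigmaFinite (volume : Measure Ω) := by
    show SigmaFinite P; infer_instance
  calc charF P X t θ ((n : ℝ) ^ (1 / α) * s)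
      = ∫ ω, cexpLin θ (fun k => X ((n : ℝ) ^ (1 / α) * (s * t k)) ω) ∂P := by
        unfold charF; simp_rw [mul_assoc]
    _ = ∫ y, cexpLin θ y ∂(Measure.map (fun ω i => X ((n : ℝ) ^ (1 / α) * (s * t i)) ω) P) :=
        (integral_map hmeas1.aemeasurable hg.aestronglyMeasurable).symm
    _ = ∫ y, cexpLin θ y
          ∂(Measure.map (fun (ω : Fin n → Ω) i => ∑ j, X (s * t i) (ω j))
            (Measure.pi fun _ : Fin n => P)) := by rw [hmap]
    _ = ∫ ω : Fin n → Ω, cexpLin θ (fun i => ∑ j, X (s * t i) (ω j))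
          ∂(Measure.pi fun _ : Fin n => P) :=
        integral_map hmeas2.aemeasurable hg.aestronglyMeasurable
    _ = ∫ ω : Fin n → Ω, ∏ j, cexpLin θ (fun k => X (s * t k) (ω j))
          ∂(Measure.pi fun _ : Fin n => P) := by
        refine integral_congr_ae (Filter.Eventually.of_forall fun ω => ?_)
        unfold cexpLin
        simp only
        rw [← Complex.exp_sum]
        congr 1
        push_cast
        rw [← Finset.sum_mul]
        congr 1
        rw [Finset.sum_comm]
        refine Finset.sum_congr rfl fun j _ => ?_
        rw [Finset.mul_sum]
    _ = (∫ ω, cexpLin θ (fun k => X (s * t k) ω) ∂P) ^ n := by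
        have hvol : (Measure.pi fun _ : Fin n => P) = (volume : Measure (Fin n → Ω)) := rfl
        rw [hvol]
        have := MeasureTheory.integral_fintype_prod_eq_pow (ι := Fin n) (μ := (volume : Measure Ω))
          (fun ω : Ω => cexpLin θ (fun k => X (s * t k) ω))
        rw [Fintype.card_fin] at this
        exact this
    _ = (charF P X t θ s) ^ n := rfl

/-- Auxiliary: a finite family of tendsto-in-measure statements gives a vector-valued one. -/
lemma tendstoInMeasure_pi {Ω : Type*} [MeasurableSpace Ω] {P : Measure Ω} {m : ℕ}
    {f : ℕ → Ω → Fin m → ℝ} {g : Ω → Fin m → ℝ}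
    (h : ∀ k, TendstoInMeasure P (fun n ω => f n ω k) atTop (fun ω => g ω k)) :
    TendstoInMeasure P f atTop g := by
  simp_rw [tendstoInMeasure_iff_dist] at h ⊢
  intro ε hε
  have hle : ∀ n, P {ω | ε ≤ dist (f n ω) (g ω)}
      ≤ ∑ k, P {ω | ε ≤ dist (f n ω k) (g ω k)} := by
    intro n
    refine le_trans (measure_mono ?_) (measure_iUnion_fintype_le _ _)
    intro ω hω
    simp only [Set.mem_setOf_eq] at hω ⊢
    by_contra hc
    simp only [Set.mem_iUnion, Set.mem_setOf_eq, not_exists, not_le] at hc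
    exact absurd ((dist_pi_lt_iff hε).2 hc) (not_lt.2 hω)
  have hsum : Tendsto (fun n => ∑ k, P {ω | ε ≤ dist (f n ω k) (g ω k)}) atTop (𝓝 0) := by
    have := tendsto_finset_sum (Finset.univ : Finset (Fin m))
      (fun k (_ : k ∈ Finset.univ) => h k ε hε)
    simpa using this
  exact tendsto_of_tendsto_of_tendsto_of_le_of_le tendsto_const_nhds hsum
    (fun n => zero_le) hle

lemma tendstoInMeasure_comp_sub {Ω E : Type*} [MeasurableSpace Ω] [PseudoMetricSpace E]
    {P : Measure Ω} {f : ℕ → Ω → E} {g : Ω → E}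
    (h : TendstoInMeasure P f atTop g) {ns : ℕ → ℕ} (hns : Tendsto ns atTop atTop) :
    TendstoInMeasure P (fun n => f (ns n)) atTop g :=
  fun ε hε => (h ε hε).comp hns

/-- Auxiliary: stochastic continuity implies sequential continuity of `charF`. -/
lemma charF_cont {Ω : Type*} [MeasurableSpace Ω] (P : Measure Ω) [IsProbabilityMeasure P]
    (X : ℝ → Ω → ℝ) (hXmeas : ∀ t, Measurable (X t))
    (hcont : StochasticallyContinuous P X) {m : ℕ} (t θ : Fin m → ℝ) (ht : ∀ i, 0 ≤ t i)
    (s : ℕ → ℝ) (s₀ : ℝ) (hs : ∀ n, 0 ≤ s n) (hs₀ : 0 ≤ s₀)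
    (hlim : Tendsto s atTop (𝓝 s₀)) :
    Tendsto (fun n => charF P X t θ (s n)) atTop (𝓝 (charF P X t θ s₀)) := by
  set Y : ℕ → Ω → Fin m → ℝ := fun n ω k => X (s n * t k) ω with hY
  set Y₀ : Ω → Fin m → ℝ := fun ω k => X (s₀ * t k) ω with hY₀
  have hYmeas : ∀ n, Measurable (Y n) :=
    fun n => measurable_pi_lambda _ fun k => hXmeas _
  have hcoord : ∀ k, TendstoInMeasure P (fun n ω => Y n ω k) atTop (fun ω => Y₀ ω k) := by
    intro k
    have h1 : Tendsto (fun n => s n * t k) atTop (𝓝[Set.Ici 0] (s₀ * t k)) := by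
      rw [tendsto_nhdsWithin_iff]
      exact ⟨hlim.mul_const _, Eventually.of_forall fun n => mul_nonneg (hs n) (ht k)⟩
    have h2 := hcont (s₀ * t k) (mul_nonneg hs₀ (ht k))
    exact fun ε hε => (h2 ε hε).comp h1
  have hYtend : TendstoInMeasure P Y atTop Y₀ := tendstoInMeasure_pi hcoord
  refine tendsto_of_subseq_tendsto fun ns hns => ?_
  obtain ⟨ms, _, hae⟩ :=
    (tendstoInMeasure_comp_sub hYtend hns).exists_seq_tendsto_ae
  refine ⟨ms, ?_⟩
  have hg := cexpLin_continuous θ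
  refine tendsto_integral_of_dominated_convergence (fun _ => (1 : ℝ))
    (fun n => (hg.measurable.comp (hYmeas (ns (ms n)))).aestronglyMeasurable)
    (integrable_const 1)
    (fun n => Eventually.of_forall fun ω => le_of_eq (cexpLin_norm θ _))
    ?_
  filter_upwards [hae] with ω hω
  exact hg.continuousAt.tendsto.comp hω

/-- Auxiliary: the rational case of the factorization. -/
lemma charF_rat {Ω : Type*} [MeasurableSpace Ω] (P : Measure Ω) [IsProbabilityMeasure P]
    (α : ℝ) (X : ℝ → Ω → ℝ) (hXmeas : ∀ t, Measurable (X t))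
    (hIDT : IsAlphaIDT P α X) {m : ℕ} (t θ : Fin m → ℝ) (ht : ∀ i, 0 ≤ t i)
    (r : ℚ) (hr0 : 0 < r) (hr1 : r < 1) :
    charF P X t θ 1
      = charF P X t θ ((r : ℝ) ^ (1 / α)) * charF P X t θ ((1 - (r : ℝ)) ^ (1 / α)) := by
  set p : ℕ := r.num.toNat with hpdef
  set q : ℕ := r.den with hqdef
  have hnum : (0 : ℤ) < r.num := Rat.num_pos.2 hr0
  have hpz : (p : ℤ) = r.num := Int.toNat_of_nonneg hnum.le
  have hq : 0 < q := r.pos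
  have hpq : p < q := by
    have := Rat.num_lt_denom_iff.2 hr1
    omega
  have hp : 0 < p := by omega
  have hq0 : (0 : ℝ) < (q : ℝ) := by exact_mod_cast hq
  have hrcast : (r : ℝ) = (p : ℝ) / (q : ℝ) := by
    rw [Rat.cast_def]
    congr 1
    · exact_mod_cast hpz.symm
  set u : ℝ := ((q : ℝ)⁻¹) ^ (1 / α) with hudef
  have hu : 0 ≤ u := Real.rpow_nonneg (inv_nonneg.2 hq0.le) _
  have key : ∀ n : ℕ, 0 < n → charF P X t θ ((n : ℝ) ^ (1 / α) * u) = (charF P X t θ u) ^ n :=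
    fun n hn => idt_pow P α X hXmeas hIDT t θ ht n hn u hu
  have hqu : (q : ℝ) ^ (1 / α) * u = 1 := by
    rw [hudef, ← Real.mul_rpow hq0.le (inv_nonneg.2 hq0.le), mul_inv_cancel₀ hq0.ne',
      Real.one_rpow]
  have hpu : (p : ℝ) ^ (1 / α) * u = ((r : ℝ)) ^ (1 / α) := by
    rw [hudef, ← Real.mul_rpow (by positivity) (inv_nonneg.2 hq0.le), hrcast]
    congr 1
  have hqpu : ((q - p : ℕ) : ℝ) ^ (1 / α) * u = (1 - (r : ℝ)) ^ (1 / α) := by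
    rw [hudef, ← Real.mul_rpow (by positivity) (inv_nonneg.2 hq0.le)]
    congr 1
    rw [Nat.cast_sub hpq.le, hrcast]
    field_simp
  calc charF P X t θ 1 = charF P X t θ ((q : ℝ) ^ (1 / α) * u) := by rw [hqu]
    _ = (charF P X t θ u) ^ q := key q hq
    _ = (charF P X t θ u) ^ p * (charF P X t θ u) ^ (q - p) := by
        rw [← pow_add]
        congr 1
        omega
    _ = charF P X t θ ((p : ℝ) ^ (1 / α) * u)
          * charF P X t θ (((q - p : ℕ) : ℝ) ^ (1 / α) * u) := by
        rw [key p hp, key (q - p) (by omega)]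
    _ = charF P X t θ ((r : ℝ) ^ (1 / α)) * charF P X t θ ((1 - (r : ℝ)) ^ (1 / α)) := by
        rw [hpu, hqpu]

/-- a stochastically continuous `α`-IDT process is temporally selfdecomposable:
for every `b ∈ (0,1)`, its finite-dimensional characteristic functions factorize as
`E[exp(iΣ θ_k X_{t_k})] = E[exp(iΣ θ_k X_{b^{1/α} t_k})] ⬝ E[exp(iΣ θ_k X_{(1-b)^{1/α} t_k})]`,
i.e. the `b^{1/α}`-residual has the finite-dimensional distributions of `X` rescaled in time
by `(1-b)^{1/α}`. -/
theorem stmt15 {Ω : Type*} [MeasurableSpace Ω] (P : Measure Ω) [IsProbabilityMeasure P]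
    (α : ℝ) (hα : 0 < α) (X : ℝ → Ω → ℝ) (hXmeas : ∀ t, Measurable (X t))
    (hcont : StochasticallyContinuous P X)
    (hIDT : IsAlphaIDT P α X) :
    ∀ b : ℝ, 0 < b → b < 1 → ∀ (m : ℕ) (t θ : Fin m → ℝ), (∀ i, 0 ≤ t i) →
      (∫ ω, Complex.exp (Complex.I * ∑ k, (θ k : ℂ) * (X (t k) ω : ℂ)) ∂P)
        = (∫ ω, Complex.exp
              (Complex.I * ∑ k, (θ k : ℂ) * (X (b ^ (1 / α) * t k) ω : ℂ)) ∂P)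
          * ∫ ω, Complex.exp
              (Complex.I * ∑ k, (θ k : ℂ) * (X ((1 - b) ^ (1 / α) * t k) ω : ℂ)) ∂P := by
  intro b hb0 hb1 m t θ ht
  have hmax : ∀ n : ℕ, max (b - 1 / ((n : ℝ) + 1)) (b / 2) < b := by
    intro n
    refine max_lt ?_ (by linarith)
    have : (0 : ℝ) < 1 / ((n : ℝ) + 1) := by positivity
    linarith
  choose r hr1 hr2 using fun n => exists_rat_btwn (hmax n)
  have hrposR : ∀ n, (0 : ℝ) < (r n : ℝ) := fun n =>
    lt_of_le_of_lt (by positivity : (0 : ℝ) ≤ b / 2)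
      (lt_of_le_of_lt (le_max_right _ _) (hr1 n))
  have hrpos : ∀ n, 0 < r n := fun n => by exact_mod_cast hrposR n
  have hrlt1R : ∀ n, (r n : ℝ) < 1 := fun n => lt_trans (hr2 n) hb1
  have hrlt1 : ∀ n, r n < 1 := fun n => by exact_mod_cast hrlt1R n
  have hrlim : Tendsto (fun n => ((r n : ℝ))) atTop (𝓝 b) := by
    refine tendsto_of_tendsto_of_tendsto_of_le_of_le
      (g := fun n : ℕ => b - 1 / ((n : ℝ) + 1)) (h := fun _ : ℕ => b) ?_ tendsto_const_nhds
      (fun n => (lt_of_le_of_lt (le_max_left _ _) (hr1 n)).le) (fun n => (hr2 n).le)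
    have h0 := tendsto_one_div_add_atTop_nhds_zero_nat (𝕜 := ℝ)
    have := tendsto_const_nhds (x := b) (f := atTop (α := ℕ)) |>.sub h0
    simpa using this
  have hA : Tendsto (fun n => charF P X t θ ((r n : ℝ) ^ (1 / α))) atTop
      (𝓝 (charF P X t θ (b ^ (1 / α)))) := by
    refine charF_cont P X hXmeas hcont t θ ht _ _
      (fun n => Real.rpow_nonneg (hrposR n).le _) (Real.rpow_nonneg hb0.le _) ?_
    exact ((Real.continuousAt_rpow_const b (1 / α) (Or.inl hb0.ne')).tendsto).comp hrlim
  have hB : Tendsto (fun n => charF P X t θ ((1 - (r n : ℝ)) ^ (1 / α))) atTop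
      (𝓝 (charF P X t θ ((1 - b) ^ (1 / α)))) := by
    refine charF_cont P X hXmeas hcont t θ ht _ _
      (fun n => Real.rpow_nonneg (by linarith [hrlt1R n]) _)
      (Real.rpow_nonneg (by linarith) _) ?_
    refine ((Real.continuousAt_rpow_const (1 - b) (1 / α)
      (Or.inl (by linarith : (0:ℝ) < 1 - b).ne')).tendsto).comp ?_
    exact tendsto_const_nhds.sub hrlim
  have hconst : Tendsto (fun _ : ℕ => charF P X t θ 1) atTop
      (𝓝 (charF P X t θ (b ^ (1 / α)) * charF P X t θ ((1 - b) ^ (1 / α)))) :=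
    (hA.mul hB).congr fun n =>
      (charF_rat P α X hXmeas hIDT t θ ht (r n) (hrpos n) (hrlt1 n)).symm
  have hmain : charF P X t θ 1
      = charF P X t θ (b ^ (1 / α)) * charF P X t θ ((1 - b) ^ (1 / α)) :=
    tendsto_nhds_unique tendsto_const_nhds hconst
  calc (∫ ω, Complex.exp (Complex.I * ∑ k, (θ k : ℂ) * (X (t k) ω : ℂ)) ∂P)
      = charF P X t θ 1 := by rw [charF_eq]; simp only [one_mul]
    _ = charF P X t θ (b ^ (1 / α)) * charF P X t θ ((1 - b) ^ (1 / α)) := hmain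
    _ = _ := by rw [charF_eq, charF_eq]
end

section
/- Let X = (X_t)_{t ≥ 0} be an α-IDT process that is selfdecomposable: for a given c ∈ (0,1), suppose there exist processes X' and U^{(c)} that are independent of each other, such that X' has the same finite-dimensional distributions as X, the finite-dimensional characteristic functions of cX' are nowhere vanishing, and X has the same finite-dimensional distributions as cX' + U^{(c)}. Then the c-residual U^{(c)} is also an α-IDT process. -/
open MeasureTheory ProbabilityTheory

open Filter Complex Real Topology

noncomputable section Stmt16Aux
set_option maxHeartbeats 1000000

/-- 1-D Gaussian kernel with variance ε. -/
def K (ε u : ℝ) : ℝ := Real.exp (-(1 / (2 * ε)) * u ^ 2) / Real.sqrt (2 * π * ε)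

/-- 1-D Gaussian weight for Fourier representation. -/
def W (ε s : ℝ) : ℝ := Real.exp (-(ε / 2) * s ^ 2) / (2 * π)

lemma K_nonneg (ε u : ℝ) : 0 ≤ K ε u :=
  div_nonneg (Real.exp_nonneg _) (Real.sqrt_nonneg _)

lemma W_nonneg (ε s : ℝ) : 0 ≤ W ε s :=
  div_nonneg (Real.exp_nonneg _) (by positivity)

lemma K_continuous (ε : ℝ) : Continuous (K ε) := by
  unfold K; fun_prop

lemma W_continuous (ε : ℝ) : Continuous (W ε) := by
  unfold W; fun_prop

lemma K_integrable {ε : ℝ} (hε : 0 < ε) : Integrable (K ε) := by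
  unfold K
  exact (integrable_exp_neg_mul_sq (by positivity)).div_const _

lemma K_integral {ε : ℝ} (hε : 0 < ε) : ∫ u, K ε u = 1 := by
  unfold K
  rw [integral_div, integral_gaussian,
    show π / (1 / (2 * ε)) = 2 * π * ε by field_simp,
    div_self (by positivity : Real.sqrt (2 * π * ε) ≠ 0)]

lemma W_integrable {ε : ℝ} (hε : 0 < ε) : Integrable (W ε) := by
  unfold W
  exact (integrable_exp_neg_mul_sq (by positivity)).div_const _

lemma fourier_W {ε : ℝ} (hε : 0 < ε) (u : ℝ) :
    ∫ s : ℝ, (W ε s : ℂ) * Complex.exp ((s * u : ℝ) * Complex.I) = (K ε u : ℂ) := by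
  have hb : (0:ℝ) < ε / 2 := by positivity
  have key := fourierIntegral_gaussian (b := ((ε / 2 : ℝ) : ℂ))
    (by simpa using hb) ((u : ℝ) : ℂ)
  have h1 : ∀ s : ℝ, (W ε s : ℂ) * Complex.exp ((s * u : ℝ) * Complex.I)
      = (Complex.exp (Complex.I * (u:ℂ) * (s:ℂ)) *
          Complex.exp (-((ε / 2 : ℝ) : ℂ) * (s:ℂ) ^ 2)) / (2 * (π : ℂ)) := by
    intro s
    rw [show (W ε s : ℂ) = Complex.exp (-((ε / 2 : ℝ):ℂ) * (s:ℂ) ^ 2) / (2 * (π:ℂ)) by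
      unfold W
      rw [Complex.ofReal_div, Complex.ofReal_exp]
      push_cast
      ring_nf]
    rw [div_mul_eq_mul_div]
    congr 1
    rw [mul_comm]
    rw [← Complex.exp_add, ← Complex.exp_add]
    congr 1
    push_cast
    ring
  simp_rw [h1]
  rw [integral_div, key]
  -- now pure computation
  have h2 : ((π : ℂ) / ((ε / 2 : ℝ) : ℂ)) ^ (1 / 2 : ℂ) = (Real.sqrt (2 * π / ε) : ℂ) := by
    rw [show ((π : ℂ) / ((ε / 2 : ℝ) : ℂ)) = ((2 * π / ε : ℝ) : ℂ) by
      push_cast; field_simp]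
    rw [Real.sqrt_eq_rpow, Complex.ofReal_cpow (by positivity)]
    push_cast
    ring_nf
  rw [h2]
  have h3 : Complex.exp (-((u:ℂ)) ^ 2 / (4 * ((ε / 2 : ℝ):ℂ)))
      = ((Real.exp (-(1 / (2 * ε)) * u ^ 2) : ℝ) : ℂ) := by
    rw [Complex.ofReal_exp]
    congr 1
    push_cast
    field_simp
    ring
  rw [h3]
  unfold K
  have hs : Real.sqrt (2 * π / ε) * Real.sqrt (2 * π * ε) = 2 * π := by
    rw [← Real.sqrt_mul (by positivity),
      show 2 * π / ε * (2 * π * ε) = (2 * π) ^ 2 by field_simp,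
      Real.sqrt_sq (by positivity)]
  rw [show ((Real.exp (-(1 / (2 * ε)) * u ^ 2) / Real.sqrt (2 * π * ε) : ℝ) : ℂ)
      = ((Real.exp (-(1 / (2 * ε)) * u ^ 2) : ℝ) : ℂ) / ((Real.sqrt (2 * π * ε) : ℝ) : ℂ) by
    push_cast; ring]
  rw [div_eq_div_iff (by exact_mod_cast (by positivity : (2 * π : ℝ) ≠ 0))
    (by exact_mod_cast (by positivity : (Real.sqrt (2 * π * ε) : ℝ) ≠ 0))]
  rw [show ((Real.sqrt (2 * π / ε) : ℝ):ℂ) * ((Real.exp (-(1 / (2 * ε)) * u ^ 2) : ℝ):ℂ) * ((Real.sqrt (2 * π * ε):ℝ):ℂ)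
      = (((Real.sqrt (2 * π / ε) * Real.sqrt (2 * π * ε)) * Real.exp (-(1 / (2 * ε)) * u ^ 2) : ℝ) : ℂ) by
    push_cast; ring]
  rw [hs]
  push_cast
  ring

variable {m : ℕ}

def Gm (ε : ℝ) (x : Fin m → ℝ) : ℝ := ∏ i, K ε (x i)
def Wm (ε : ℝ) (s : Fin m → ℝ) : ℝ := ∏ i, W ε (s i)
/-- elementary character e^{i⟨θ,x⟩}. -/
def cf (θ x : Fin m → ℝ) : ℂ := Complex.exp (((∑ k, θ k * x k : ℝ) : ℂ) * Complex.I)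

lemma Gm_nonneg (ε : ℝ) (x : Fin m → ℝ) : 0 ≤ Gm ε x :=
  Finset.prod_nonneg fun i _ => K_nonneg _ _

lemma Gm_continuous (ε : ℝ) : Continuous (Gm (m := m) ε) :=
  continuous_finset_prod _ fun i _ => (K_continuous ε).comp (continuous_apply i)

lemma Wm_continuous (ε : ℝ) : Continuous (Wm (m := m) ε) :=
  continuous_finset_prod _ fun i _ => (W_continuous ε).comp (continuous_apply i)

lemma Gm_integrable {ε : ℝ} (hε : 0 < ε) : Integrable (Gm (m := m) ε) :=
  Integrable.fintype_prod (f := fun _ v => K ε v) fun _ => K_integrable hε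

lemma Wm_integrable {ε : ℝ} (hε : 0 < ε) : Integrable (Wm (m := m) ε) :=
  Integrable.fintype_prod (f := fun _ v => W ε v) fun _ => W_integrable hε

lemma Gm_integral {ε : ℝ} (hε : 0 < ε) : ∫ x : Fin m → ℝ, Gm ε x = 1 := by
  rw [show (fun x : Fin m → ℝ => Gm ε x) = fun x : Fin m → ℝ => ∏ i, K ε (x i) from rfl,
    integral_fintype_prod_volume_eq_pow (K ε), K_integral hε, one_pow]

lemma norm_cf (θ x : Fin m → ℝ) : ‖cf θ x‖ = 1 := by
  simp [cf, Complex.norm_exp]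

lemma cf_continuous₂ : Continuous fun p : (Fin m → ℝ) × (Fin m → ℝ) => cf p.1 p.2 := by
  unfold cf
  exact Complex.continuous_exp.comp
    ((Complex.continuous_ofReal.comp (by fun_prop)).mul continuous_const)

lemma cf_mul_neg (s x y : Fin m → ℝ) : cf s x * cf (-s) y = cf s (x - y) := by
  unfold cf
  rw [← Complex.exp_add]
  congr 1
  rw [← add_mul]
  congr 1
  rw [← Complex.ofReal_add]
  congr 1
  rw [← Finset.sum_add_distrib]
  congr 1
  ext k
  simp [Pi.sub_apply]
  ring

lemma fourier_Wm {ε : ℝ} (hε : 0 < ε) (u : Fin m → ℝ) :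
    ∫ s : Fin m → ℝ, (Wm ε s : ℂ) * cf s u = (Gm ε u : ℂ) := by
  have h1 : ∀ s : Fin m → ℝ, (Wm ε s : ℂ) * cf s u
      = ∏ i, ((W ε (s i) : ℂ) * Complex.exp ((s i * u i : ℝ) * Complex.I)) := by
    intro s
    unfold Wm cf
    rw [Complex.ofReal_prod, Complex.ofReal_sum]
    rw [Finset.sum_mul, Complex.exp_sum, ← Finset.prod_mul_distrib]
  simp_rw [h1]
  rw [integral_fintype_prod_volume_eq_prod (ι := Fin m)
    (f := fun i v => (W ε v : ℂ) * Complex.exp ((v * u i : ℝ) * Complex.I))]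
  unfold Gm
  rw [Complex.ofReal_prod]
  exact Finset.prod_congr rfl fun i _ => fourier_W hε (u i)

lemma Wm_nonneg {m : ℕ} (ε : ℝ) (s : Fin m → ℝ) : 0 ≤ Wm ε s :=
  Finset.prod_nonneg fun _ _ => W_nonneg _ _

lemma cf_cont_comp {m : ℕ} {X : Type*} [TopologicalSpace X] {f g : X → Fin m → ℝ}
    (hf : Continuous f) (hg : Continuous g) : Continuous fun a => cf (f a) (g a) := by
  unfold cf; fun_prop

/-- characteristic function of a measure on `Fin m → ℝ`. -/
def charFn (μ : Measure (Fin m → ℝ)) (θ : Fin m → ℝ) : ℂ := ∫ x, cf θ x ∂μ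

lemma integrable_cf {μ : Measure (Fin m → ℝ)} [IsFiniteMeasure μ] (θ : Fin m → ℝ) :
    Integrable (cf θ) μ :=
  ⟨(cf_cont_comp continuous_const continuous_id).aestronglyMeasurable,
    HasFiniteIntegral.of_bounded (C := 1) (Eventually.of_forall fun x => (norm_cf θ x).le)⟩

/-- L1: density representation. -/
lemma density_rep {ε : ℝ} (hε : 0 < ε) (μ : Measure (Fin m → ℝ)) [IsFiniteMeasure μ]
    (x : Fin m → ℝ) :
    ∫ s : Fin m → ℝ, (Wm ε s : ℂ) * cf s x * charFn μ (-s)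
      = ∫ y, (Gm ε (x - y) : ℂ) ∂μ := by
  have h1 : ∀ s : Fin m → ℝ, (Wm ε s : ℂ) * cf s x * charFn μ (-s)
      = ∫ y, (Wm ε s : ℂ) * cf s x * cf (-s) y ∂μ := fun s =>
    (integral_const_mul _ _).symm
  simp_rw [h1]
  have hint : Integrable (Function.uncurry fun s y =>
      (Wm ε s : ℂ) * cf s x * cf (-s) y) ((volume : Measure (Fin m → ℝ)).prod μ) := by
    have hg : Integrable (fun p : (Fin m → ℝ) × (Fin m → ℝ) => Wm ε p.1 * 1)
        ((volume : Measure (Fin m → ℝ)).prod μ) :=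
      (Wm_integrable hε).mul_prod (integrable_const 1)
    refine Integrable.mono' hg ?_ (Eventually.of_forall fun p => ?_)
    · refine Continuous.aestronglyMeasurable ?_
      refine Continuous.mul (Continuous.mul ?_ ?_) ?_
      · exact Complex.continuous_ofReal.comp ((Wm_continuous ε).comp continuous_fst)
      · exact cf_cont_comp continuous_fst continuous_const
      · exact cf_cont_comp (continuous_fst.neg) continuous_snd
    · simp only [Function.uncurry, norm_mul, norm_cf, mul_one, Complex.norm_real]
      rw [Real.norm_of_nonneg (Wm_nonneg _ _)]
  rw [integral_integral_swap hint]
  refine integral_congr_ae (Eventually.of_forall fun y => ?_)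
  simp_rw [mul_assoc, cf_mul_neg]
  exact fourier_Wm hε (x - y)

/-- integral of a translate of the Gaussian kernel. -/
lemma Gm_integral_sub {ε : ℝ} (hε : 0 < ε) (y : Fin m → ℝ) :
    ∫ x : Fin m → ℝ, Gm ε (x - y) = 1 := by
  rw [integral_sub_right_eq_self (fun z => Gm ε z) y]
  exact Gm_integral hε

lemma Gm_integrable_sub {ε : ℝ} (hε : 0 < ε) (y : Fin m → ℝ) :
    Integrable (fun x : Fin m → ℝ => Gm ε (x - y)) :=
  (Gm_integrable hε).comp_sub_right y

/-- section integrability for L2. -/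
lemma sect_int {ε : ℝ} (hε : 0 < ε) {h : (Fin m → ℝ) → ℝ} (hcont : Continuous h)
    {C : ℝ} (hC : ∀ x, |h x| ≤ C) (y : Fin m → ℝ) :
    Integrable (fun x : Fin m → ℝ => (h x : ℂ) * (Gm ε (x - y) : ℂ)) := by
  have : Integrable (fun x : Fin m → ℝ => h x * Gm ε (x - y)) :=
    (Gm_integrable_sub hε y).bdd_mul hcont.aestronglyMeasurable (c := C)
      (Eventually.of_forall fun x => (Real.norm_eq_abs _).le.trans (hC x))
  refine (this.ofReal (𝕜 := ℂ)).congr (Eventually.of_forall fun x => ?_)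
  push_cast
  rfl

/-- L2: pairing swap. -/
lemma pairing_swap {ε : ℝ} (hε : 0 < ε) (μ : Measure (Fin m → ℝ)) [IsFiniteMeasure μ]
    {h : (Fin m → ℝ) → ℝ} (hcont : Continuous h) {C : ℝ} (hC : ∀ x, |h x| ≤ C) :
    ∫ x : Fin m → ℝ, (h x : ℂ) * ∫ y, (Gm ε (x - y) : ℂ) ∂μ
      = ∫ y, (∫ x : Fin m → ℝ, (h x : ℂ) * (Gm ε (x - y) : ℂ)) ∂μ := by
  have hcontF : Continuous fun p : (Fin m → ℝ) × (Fin m → ℝ) =>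
      (h p.1 : ℂ) * (Gm ε (p.1 - p.2) : ℂ) := by
    apply Continuous.mul
    · exact Complex.continuous_ofReal.comp (hcont.comp continuous_fst)
    · exact Complex.continuous_ofReal.comp
        ((Gm_continuous ε).comp (continuous_fst.sub continuous_snd))
  have hint : Integrable (fun p : (Fin m → ℝ) × (Fin m → ℝ) => (h p.1 : ℂ) * (Gm ε (p.1 - p.2) : ℂ))
      ((volume : Measure (Fin m → ℝ)).prod μ) := by
    rw [integrable_prod_iff' hcontF.aestronglyMeasurable]
    constructor
    · exact Eventually.of_forall fun y => sect_int hε hcont hC y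
    · refine Integrable.mono' (integrable_const C) ?_ (Eventually.of_forall fun y => ?_)
      · exact (hcontF.norm.stronglyMeasurable.integral_prod_left').aestronglyMeasurable
      · have hb : ∀ x : Fin m → ℝ, ‖(h x : ℂ) * (Gm ε (x - y) : ℂ)‖ ≤ C * Gm ε (x - y) := by
          intro x
          rw [norm_mul, Complex.norm_real, Complex.norm_real,
            Real.norm_of_nonneg (Gm_nonneg _ _)]
          exact mul_le_mul_of_nonneg_right ((Real.norm_eq_abs _).le.trans (hC x))
            (Gm_nonneg _ _)
        have h1 : ∫ x : Fin m → ℝ, ‖(h x : ℂ) * (Gm ε (x - y) : ℂ)‖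
            ≤ ∫ x : Fin m → ℝ, C * Gm ε (x - y) :=
          integral_mono_of_nonneg (Eventually.of_forall fun x => norm_nonneg _)
            ((Gm_integrable_sub hε y).const_mul C) (Eventually.of_forall hb)
        have h2 : ∫ x : Fin m → ℝ, C * Gm ε (x - y) = C := by
          rw [integral_const_mul, Gm_integral_sub hε, mul_one]
        rw [Real.norm_of_nonneg (integral_nonneg fun x => norm_nonneg _)]
        exact h1.trans (le_of_eq h2)
  have h1 : ∀ x : Fin m → ℝ, (h x : ℂ) * ∫ y, (Gm ε (x - y) : ℂ) ∂μ
      = ∫ y, (h x : ℂ) * (Gm ε (x - y) : ℂ) ∂μ := fun x =>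
    (integral_const_mul _ _).symm
  simp_rw [h1]
  exact integral_integral_swap (f := fun x y => (h x : ℂ) * (Gm ε (x - y) : ℂ)) hint

/-- K scaling. -/
lemma K_scale {ε : ℝ} (hε : 0 < ε) (v : ℝ) :
    K ε (Real.sqrt ε * v) = (Real.sqrt ε)⁻¹ * K 1 v := by
  unfold K
  rw [mul_pow, Real.sq_sqrt hε.le]
  rw [show -(1 / (2 * ε)) * (ε * v ^ 2) = -(1 / (2 * 1)) * v ^ 2 by field_simp]
  rw [show 2 * π * ε = (2 * π * 1) * ε by ring, Real.sqrt_mul (by positivity)]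
  have h1 : (0:ℝ) < Real.sqrt (2 * π * 1) := by positivity
  have h2 : (0:ℝ) < Real.sqrt ε := Real.sqrt_pos.mpr hε
  field_simp

lemma Gm_scale {ε : ℝ} (hε : 0 < ε) (w : Fin m → ℝ) :
    Gm ε (Real.sqrt ε • w) = ((Real.sqrt ε) ^ m)⁻¹ * Gm 1 w := by
  unfold Gm
  have : ∀ i : Fin m, K ε ((Real.sqrt ε • w) i) = (Real.sqrt ε)⁻¹ * K 1 (w i) := by
    intro i
    rw [Pi.smul_apply, smul_eq_mul, K_scale hε]
  simp_rw [this, Finset.prod_mul_distrib, Finset.prod_const, Finset.card_univ, Fintype.card_fin,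
    inv_pow]

/-- L3: translation and scaling. -/
lemma translate_scale {ε : ℝ} (hε : 0 < ε) {h : (Fin m → ℝ) → ℝ} (hcont : Continuous h)
    (y : Fin m → ℝ) :
    ∫ x : Fin m → ℝ, (h x : ℂ) * (Gm ε (x - y) : ℂ)
      = ∫ w : Fin m → ℝ, (h (Real.sqrt ε • w + y) : ℂ) * (Gm 1 w : ℂ) := by
  have t1 : ∫ x : Fin m → ℝ, (h x : ℂ) * (Gm ε (x - y) : ℂ)
      = ∫ z : Fin m → ℝ, (h (z + y) : ℂ) * (Gm ε z : ℂ) := by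
    rw [← integral_add_right_eq_self (fun x => (h x : ℂ) * (Gm ε (x - y) : ℂ)) y]
    simp
  rw [t1]
  have hsq : (0:ℝ) < Real.sqrt ε := Real.sqrt_pos.mpr hε
  have hne : ((Real.sqrt ε) ^ m : ℝ) ≠ 0 := by positivity
  have key := Measure.integral_comp_smul (μ := (volume : Measure (Fin m → ℝ)))
    (f := fun z => (h (z + y) : ℂ) * (Gm ε z : ℂ)) (Real.sqrt ε)
  rw [Module.finrank_pi ℝ, Fintype.card_fin] at key
  rw [_root_.abs_of_nonneg (by positivity)] at key
  have h2 : (fun w : Fin m → ℝ => (h (Real.sqrt ε • w + y) : ℂ) * (Gm ε (Real.sqrt ε • w) : ℂ))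
      = fun w : Fin m → ℝ => ((Real.sqrt ε ^ m)⁻¹ : ℝ) •
          ((h (Real.sqrt ε • w + y) : ℂ) * (Gm 1 w : ℂ)) := by
    funext w
    rw [Gm_scale hε, Complex.real_smul]
    push_cast
    ring
  rw [h2, integral_smul] at key
  exact (smul_right_injective ℂ (inv_ne_zero hne) key).symm

lemma integrable_mul_Gm1 {φ : (Fin m → ℝ) → ℝ} (hφ : Continuous φ) {C : ℝ}
    (hC : ∀ x, |φ x| ≤ C) :
    Integrable (fun w : Fin m → ℝ => (φ w : ℂ) * (Gm 1 w : ℂ)) := by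
  have : Integrable (fun w : Fin m → ℝ => φ w * Gm 1 w) :=
    (Gm_integrable one_pos).bdd_mul hφ.aestronglyMeasurable (c := C)
      (Eventually.of_forall fun x => (Real.norm_eq_abs _).le.trans (hC x))
  refine (this.ofReal (𝕜 := ℂ)).congr (Eventually.of_forall fun x => ?_)
  push_cast
  rfl

lemma norm_mul_Gm1_le {φ : (Fin m → ℝ) → ℝ} {C : ℝ} (hC : ∀ x, |φ x| ≤ C)
    (w : Fin m → ℝ) : ‖(φ w : ℂ) * (Gm 1 w : ℂ)‖ ≤ C * Gm 1 w := by
  rw [norm_mul, Complex.norm_real, Complex.norm_real, Real.norm_of_nonneg (Gm_nonneg _ _)]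
  exact mul_le_mul_of_nonneg_right ((Real.norm_eq_abs _).le.trans (hC w)) (Gm_nonneg _ _)

lemma smoothed_norm_le {φ : (Fin m → ℝ) → ℝ} (hφ : Continuous φ) {C : ℝ}
    (hC : ∀ x, |φ x| ≤ C) :
    ‖∫ w : Fin m → ℝ, (φ w : ℂ) * (Gm 1 w : ℂ)‖ ≤ C := by
  refine (norm_integral_le_integral_norm _).trans ?_
  have h1 : ∫ w : Fin m → ℝ, ‖(φ w : ℂ) * (Gm 1 w : ℂ)‖
      ≤ ∫ w : Fin m → ℝ, C * Gm 1 w :=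
    integral_mono_of_nonneg (Eventually.of_forall fun w => norm_nonneg _)
      ((Gm_integrable one_pos).const_mul C) (Eventually.of_forall (norm_mul_Gm1_le hC))
  refine h1.trans (le_of_eq ?_)
  rw [integral_const_mul, Gm_integral one_pos, mul_one]

lemma eps_pos (k : ℕ) : (0:ℝ) < 1 / (k + 1) := by positivity

lemma ck_tendsto : Tendsto (fun k : ℕ => Real.sqrt (1 / (k + 1))) atTop (𝓝 0) := by
  have h0 := tendsto_one_div_add_atTop_nhds_zero_nat (𝕜 := ℝ)
  have h1 := (Real.continuous_sqrt.tendsto 0).comp h0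
  rw [Real.sqrt_zero] at h1
  exact h1

/-- limit of the smoothed integrals. -/
lemma smooth_tendsto (μ : Measure (Fin m → ℝ)) [IsFiniteMeasure μ]
    {h : (Fin m → ℝ) → ℝ} (hcont : Continuous h) {C : ℝ} (hC : ∀ x, |h x| ≤ C) :
    Tendsto (fun k : ℕ => ∫ y,
        (∫ w : Fin m → ℝ, (h (Real.sqrt (1 / (k + 1)) • w + y) : ℂ) * (Gm 1 w : ℂ)) ∂μ)
      atTop (𝓝 (∫ y, (h y : ℂ) ∂μ)) := by
  have hC0 : 0 ≤ C := le_trans (abs_nonneg _) (hC 0)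
  have inner : ∀ y : Fin m → ℝ, Tendsto (fun k : ℕ =>
      ∫ w : Fin m → ℝ, (h (Real.sqrt (1 / (k + 1)) • w + y) : ℂ) * (Gm 1 w : ℂ))
      atTop (𝓝 ((h y : ℂ))) := by
    intro y
    have lim : Tendsto (fun k : ℕ => ∫ w : Fin m → ℝ,
        (h (Real.sqrt (1 / (k + 1)) • w + y) : ℂ) * (Gm 1 w : ℂ)) atTop
        (𝓝 (∫ w : Fin m → ℝ, (h y : ℂ) * (Gm 1 w : ℂ))) := by
      refine tendsto_integral_of_dominated_convergence (bound := fun w => C * Gm 1 w)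
        (fun k => ?_) ((Gm_integrable one_pos).const_mul C)
        (fun k => Eventually.of_forall fun w => norm_mul_Gm1_le (fun x => hC _) w)
        (Eventually.of_forall fun w => ?_)
      · exact ((Complex.continuous_ofReal.comp (hcont.comp
          ((continuous_const_smul (Real.sqrt (1 / ((k:ℝ) + 1)))).add continuous_const))).mul
            (Complex.continuous_ofReal.comp (Gm_continuous 1))).aestronglyMeasurable
      · have h1 : Tendsto (fun k : ℕ => Real.sqrt (1 / (k + 1)) • w + y) atTop (𝓝 y) := by
          have := (ck_tendsto.smul_const w).add_const y
          simpa using this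
        exact ((Complex.continuous_ofReal.tendsto _).comp
          ((hcont.tendsto y).comp h1)).mul_const _
    have : ∫ w : Fin m → ℝ, (h y : ℂ) * (Gm 1 w : ℂ) = (h y : ℂ) := by
      rw [integral_const_mul]
      have hoy : ∫ w : Fin m → ℝ, ((Gm 1 w : ℝ) : ℂ) = ((∫ w : Fin m → ℝ, Gm 1 w : ℝ) : ℂ) :=
        integral_ofReal
      rw [hoy, Gm_integral one_pos]
      simp
    rwa [this] at lim
  refine tendsto_integral_of_dominated_convergence (bound := fun _ => C)
    (fun k => ?_) (integrable_const C)
    (fun k => Eventually.of_forall fun y => ?_)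
    (Eventually.of_forall fun y => inner y)
  · -- a.e. strong measurability in y via continuity
    refine (continuous_of_dominated (bound := fun w => C * Gm 1 w) (fun y => ?_)
      (fun y => Eventually.of_forall fun w => norm_mul_Gm1_le (fun x => hC _) w)
      ((Gm_integrable one_pos).const_mul C)
      (Eventually.of_forall fun w => ?_)).aestronglyMeasurable
    · exact ((Complex.continuous_ofReal.comp (hcont.comp
        ((continuous_const_smul (Real.sqrt (1 / ((k:ℝ) + 1)))).add continuous_const))).mul
          (Complex.continuous_ofReal.comp (Gm_continuous 1))).aestronglyMeasurable
    · exact (Complex.continuous_ofReal.comp (hcont.comp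
        ((continuous_const.add continuous_id)))).mul continuous_const
  · exact smoothed_norm_le (hcont.comp
      ((continuous_const_smul (Real.sqrt (1 / ((k:ℝ) + 1)))).add continuous_const)) (fun x => hC _)

/-- Main uniqueness theorem: finite measures on `Fin m → ℝ` with equal characteristic
functions are equal. -/
theorem ext_of_charFn_eq (μ ν : Measure (Fin m → ℝ)) [IsFiniteMeasure μ] [IsFiniteMeasure ν]
    (hchar : ∀ θ, charFn μ θ = charFn ν θ) : μ = ν := by
  have main : ∀ (h : (Fin m → ℝ) → ℝ), Continuous h → ∀ C : ℝ, (∀ x, |h x| ≤ C) →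
      ∫ y, h y ∂μ = ∫ y, h y ∂ν := by
    intro h hcont C hC
    have chain : ∀ (ρ : Measure (Fin m → ℝ)), IsFiniteMeasure ρ → ∀ k : ℕ,
        ∫ y, (∫ w : Fin m → ℝ, (h (Real.sqrt (1 / (k + 1)) • w + y) : ℂ) * (Gm 1 w : ℂ)) ∂ρ
        = ∫ x : Fin m → ℝ, (h x : ℂ) *
            ∫ s : Fin m → ℝ, (Wm (1 / (k + 1)) s : ℂ) * cf s x * charFn ρ (-s) := by
      intro ρ hρ k
      haveI := hρ
      have hε := eps_pos k
      calc ∫ y, (∫ w : Fin m → ℝ, (h (Real.sqrt (1 / (k + 1)) • w + y) : ℂ) * (Gm 1 w : ℂ)) ∂ρ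
          = ∫ y, (∫ x : Fin m → ℝ, (h x : ℂ) * (Gm (1 / (k + 1)) (x - y) : ℂ)) ∂ρ := by
            refine integral_congr_ae (Eventually.of_forall fun y => ?_)
            exact (translate_scale hε hcont y).symm
        _ = ∫ x : Fin m → ℝ, (h x : ℂ) * ∫ y, (Gm (1 / (k + 1)) (x - y) : ℂ) ∂ρ :=
            (pairing_swap hε ρ hcont hC).symm
        _ = ∫ x : Fin m → ℝ, (h x : ℂ) *
              ∫ s : Fin m → ℝ, (Wm (1 / (k + 1)) s : ℂ) * cf s x * charFn ρ (-s) := by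
            refine integral_congr_ae (Eventually.of_forall fun x => ?_)
            exact congrArg (fun z => (h x : ℂ) * z) (density_rep hε ρ x).symm
    have heq : ∀ k : ℕ,
        ∫ y, (∫ w : Fin m → ℝ, (h (Real.sqrt (1 / (k + 1)) • w + y) : ℂ) * (Gm 1 w : ℂ)) ∂μ
        = ∫ y, (∫ w : Fin m → ℝ, (h (Real.sqrt (1 / (k + 1)) • w + y) : ℂ) * (Gm 1 w : ℂ)) ∂ν := by
      intro k
      rw [chain μ inferInstance k, chain ν inferInstance k]
      simp_rw [hchar]
    have t1 := smooth_tendsto μ hcont hC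
    have t2 := smooth_tendsto ν hcont hC
    simp_rw [heq] at t1
    have hlim : ∫ y, (h y : ℂ) ∂μ = ∫ y, (h y : ℂ) ∂ν := tendsto_nhds_unique t1 t2
    rw [show (∫ y, (h y : ℂ) ∂μ) = ((∫ y, h y ∂μ : ℝ) : ℂ) from integral_ofReal,
      show (∫ y, (h y : ℂ) ∂ν) = ((∫ y, h y ∂ν : ℝ) : ℂ) from integral_ofReal] at hlim
    exact_mod_cast hlim
  refine ext_of_forall_lintegral_eq_of_IsFiniteMeasure fun f => ?_
  obtain ⟨C, hCb⟩ := f.bounded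
  set h : (Fin m → ℝ) → ℝ := fun x => (f x : ℝ) with hh
  have hcont : Continuous h := NNReal.continuous_coe.comp f.continuous
  have hbd : ∀ x, |h x| ≤ C + (f 0 : ℝ) := by
    intro x
    have h1 : dist (f x) (f 0) ≤ C := hCb x 0
    have h2 : dist (h x) (h 0) ≤ C := by
      simpa [hh, NNReal.dist_eq, Real.dist_eq] using h1
    have h3 : |h x| - |h 0| ≤ |h x - h 0| := abs_sub_abs_le_abs_sub _ _
    have h4 : |h 0| = (f 0 : ℝ) := abs_of_nonneg (f 0).2
    have h5 : |h x - h 0| = dist (h x) (h 0) := (Real.dist_eq _ _).symm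
    linarith
  have hint : ∀ (ρ : Measure (Fin m → ℝ)), IsFiniteMeasure ρ → Integrable h ρ := by
    intro ρ hρ
    haveI := hρ
    exact ⟨hcont.aestronglyMeasurable, HasFiniteIntegral.of_bounded
      (Eventually.of_forall fun x => (Real.norm_eq_abs _).le.trans (hbd x))⟩
  rw [lintegral_coe_eq_integral f (hint μ inferInstance),
    lintegral_coe_eq_integral f (hint ν inferInstance)]
  rw [main h hcont _ hbd]


lemma cf_split {m : ℕ} (θ : Fin m → ℝ) (c : ℝ) (v w : Fin m → ℝ) :
    cf θ (fun i => c * v i + w i) = cf (fun k => c * θ k) v * cf θ w := by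
  unfold cf
  rw [← Complex.exp_add, ← add_mul, ← Complex.ofReal_add, ← Finset.sum_add_distrib]
  have h : (∑ k, θ k * (fun i => c * v i + w i) k : ℝ)
      = ∑ k, ((fun k => c * θ k) k * v k + θ k * w k) := by
    apply Finset.sum_congr rfl; intros; simp only []; ring
  rw [h]

lemma cf_scale {m : ℕ} (θ : Fin m → ℝ) (c : ℝ) (v : Fin m → ℝ) :
    cf θ (fun i => c * v i) = cf (fun k => c * θ k) v := by
  unfold cf
  have h : (∑ k, θ k * (fun i => c * v i) k : ℝ) = ∑ k, (fun k => c * θ k) k * v k := by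
    apply Finset.sum_congr rfl; intros; simp only []; ring
  rw [h]

lemma cf_sum_prod {m n : ℕ} (θ : Fin m → ℝ) (a : Fin n → Fin m → ℝ) :
    cf θ (fun i => ∑ j, a j i) = ∏ j, cf θ (a j) := by
  unfold cf
  rw [← Complex.exp_sum, ← Finset.sum_mul, ← Complex.ofReal_sum]
  have h : (∑ k, θ k * (fun i => ∑ j, a j i) k : ℝ) = ∑ j, ∑ k, θ k * a j k := by
    simp only [Finset.mul_sum]
    exact Finset.sum_comm
  rw [h]

lemma hn_form {m : ℕ} (θ y : Fin m → ℝ) (c : ℝ) :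
    Complex.exp (Complex.I * ∑ k, (θ k : ℂ) * ((c * y k : ℝ) : ℂ))
      = cf θ (fun i => c * y i) := by
  unfold cf
  have h : (∑ k, θ k * (fun i => c * y i) k : ℝ) = ∑ k, θ k * (c * y k) := by
    apply Finset.sum_congr rfl; intros; simp only []
  rw [h, mul_comm]
  congr 1
  push_cast
  rfl

section Prob
variable {Ω : Type*} [MeasurableSpace Ω]

lemma char_map_eq {m : ℕ} (P : Measure Ω) (F : Ω → (Fin m → ℝ)) (hF : Measurable F)
    (θ : Fin m → ℝ) : charFn (P.map F) θ = ∫ ω, cf θ (F ω) ∂P := by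
  unfold charFn
  exact integral_map hF.aemeasurable
    (cf_cont_comp continuous_const continuous_id).aestronglyMeasurable

lemma integrable_cf_comp (P : Measure Ω) [IsProbabilityMeasure P] {m : ℕ}
    (F : Ω → (Fin m → ℝ)) (hF : Measurable F) (θ : Fin m → ℝ) :
    Integrable (fun ω => cf θ (F ω)) P :=
  ⟨((cf_cont_comp continuous_const continuous_id).measurable.comp hF).aestronglyMeasurable,
    HasFiniteIntegral.of_bounded (C := 1) (Eventually.of_forall fun x => (norm_cf θ _).le)⟩

/-- characteristic function of a sum of iid coordinates on a product space. -/
lemma char_pi_sum (P : Measure Ω) [IsProbabilityMeasure P] {n m : ℕ} (Y : Fin m → Ω → ℝ)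
    (hY : ∀ k, Measurable (Y k)) (θ : Fin m → ℝ) :
    ∫ ω : Fin n → Ω, cf θ (fun i => ∑ j, Y i (ω j)) ∂(Measure.pi fun _ => P)
      = (∫ ω, cf θ (fun i => Y i ω) ∂P) ^ n := by
  have h1 : ∀ ω : Fin n → Ω, cf θ (fun i => ∑ j, Y i (ω j))
      = ∏ j, cf θ (fun i => Y i (ω j)) := fun ω =>
    cf_sum_prod θ (fun j i => Y i (ω j))
  simp_rw [h1]
  letI : MeasureSpace Ω := ⟨P⟩
  haveI : SigmaFinite (volume : Measure Ω) := (inferInstance : SigmaFinite P)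
  rw [show (Measure.pi fun _ : Fin n => P) = (volume : Measure (Fin n → Ω)) from
    (volume_pi).symm]
  rw [show ((∫ ω, cf θ (fun i => Y i ω) ∂P) ^ n)
      = ((∫ ω, cf θ (fun i => Y i ω)) ^ (Fintype.card (Fin n))) by
    rw [Fintype.card_fin]; rfl]
  exact integral_fintype_prod_volume_eq_pow (ι := Fin n) (fun ω => cf θ (fun i => Y i ω))

/-- independence factorizes expectations of bounded continuous functionals. -/
lemma indep_integral_mul (P : Measure Ω) [IsProbabilityMeasure P] {m : ℕ}
    {A B : Ω → (Fin m → ℝ)} (hA : Measurable A) (hB : Measurable B)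
    (hAB : IndepFun A B P) (F G : (Fin m → ℝ) → ℂ) (hF : Continuous F) (hG : Continuous G) :
    ∫ ω, F (A ω) * G (B ω) ∂P = (∫ ω, F (A ω) ∂P) * ∫ ω, G (B ω) ∂P := by
  have hmap := (indepFun_iff_map_prod_eq_prod_map_map hA.aemeasurable hB.aemeasurable).mp hAB
  have hFG : Continuous fun p : (Fin m → ℝ) × (Fin m → ℝ) => F p.1 * G p.2 :=
    (hF.comp continuous_fst).mul (hG.comp continuous_snd)
  calc ∫ ω, F (A ω) * G (B ω) ∂P
      = ∫ p, F p.1 * G p.2 ∂(P.map fun ω => (A ω, B ω)) :=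
        (integral_map (hA.prodMk hB).aemeasurable hFG.aestronglyMeasurable).symm
    _ = ∫ p, F p.1 * G p.2 ∂((P.map A).prod (P.map B)) := by rw [hmap]
    _ = (∫ x, F x ∂(P.map A)) * ∫ x, G x ∂(P.map B) := integral_prod_mul F G
    _ = (∫ ω, F (A ω) ∂P) * ∫ ω, G (B ω) ∂P := by
        rw [integral_map hA.aemeasurable hF.aestronglyMeasurable,
          integral_map hB.aemeasurable hG.aestronglyMeasurable]

end Prob
end Stmt16Aux

set_option maxHeartbeats 1000000 in
/-- let `X` be an `α`-IDT process which is selfdecomposable at `c ∈ (0,1)`: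
there are processes `X'` and `U` (the `c`-residual), independent of each other, with `X'` a
copy of `X`, the finite-dimensional characteristic functions of `cX'` nowhere vanishing, and
`X` having the same finite-dimensional distributions as `cX' + U`.  Then `U` is also an
`α`-IDT process. -/
theorem stmt16 {Ω : Type*} [MeasurableSpace Ω] (P : Measure Ω) [IsProbabilityMeasure P]
    (α : ℝ) (hα : 0 < α) (c : ℝ) (hc0 : 0 < c) (hc1 : c < 1)
    (X X' U : ℝ → Ω → ℝ)
    (hXmeas : ∀ t, Measurable (X t)) (hX'meas : ∀ t, Measurable (X' t))
    (hUmeas : ∀ t, Measurable (U t))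
    (hIDT : IsAlphaIDT P α X)
    (hindep : ProbabilityTheory.IndepFun
      (fun ω => (fun t => X' t ω : ℝ → ℝ)) (fun ω => (fun t => U t ω : ℝ → ℝ)) P)
    (hcopy : HasSameFDD P P X' X)
    (hnonvanish : ∀ (m : ℕ) (t θ : Fin m → ℝ), (∀ i, 0 ≤ t i) →
      (∫ ω, Complex.exp (Complex.I * ∑ k, (θ k : ℂ) * ((c * X' (t k) ω : ℝ) : ℂ)) ∂P) ≠ 0)
    (hdecomp : HasSameFDD P P X (fun t ω => c * X' t ω + U t ω)) :
    IsAlphaIDT P α U := by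
  intro n hn m t ht
  set r : ℝ := (n : ℝ) ^ (1 / α) with hrdef
  have hr : 0 ≤ r := Real.rpow_nonneg (Nat.cast_nonneg n) _
  set s : Fin m → ℝ := fun i => r * t i with hsdef
  have hs : ∀ i, 0 ≤ s i := fun i => mul_nonneg hr (ht i)
  -- measurability of all marginal maps
  have hmarg : ∀ (Z : ℝ → Ω → ℝ), (∀ u, Measurable (Z u)) → ∀ (u : Fin m → ℝ),
      Measurable (fun ω => (fun i => Z (u i) ω)) := fun Z hZ u =>
    measurable_pi_lambda _ fun i => hZ _
  have hsum : Measurable (fun ω : Fin n → Ω => (fun i => ∑ j, U (t i) (ω j))) :=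
    measurable_pi_lambda _ fun i =>
      Finset.measurable_sum _ fun j _ => (hUmeas _).comp (measurable_pi_apply j)
  haveI : IsProbabilityMeasure (P.map fun ω i => U (s i) ω) :=
    Measure.isProbabilityMeasure_map (hmarg U hUmeas s).aemeasurable
  haveI : IsProbabilityMeasure
      ((Measure.pi fun _ : Fin n => P).map fun ω i => ∑ j, U (t i) (ω j)) :=
    Measure.isProbabilityMeasure_map hsum.aemeasurable
  apply ext_of_charFn_eq
  intro θ
  -- notation for finite-dimensional characteristic functions
  set φ : (ℝ → Ω → ℝ) → (Fin m → ℝ) → (Fin m → ℝ) → ℂ :=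
    fun Z u θ' => ∫ ω, cf θ' (fun i => Z (u i) ω) ∂P with hφdef
  -- characteristic function of map equalities
  have hchar_of_map : ∀ (Z W : ℝ → Ω → ℝ), (∀ u, Measurable (Z u)) →
      (∀ u, Measurable (W u)) → ∀ (u v : Fin m → ℝ),
      (Measure.map (fun ω i => Z (u i) ω) P = Measure.map (fun ω i => W (v i) ω) P) →
      ∀ θ', φ Z u θ' = φ W v θ' := by
    intro Z W hZ hW u v hmapeq θ'
    rw [hφdef]
    simp only []
    rw [← char_map_eq P _ (hmarg Z hZ u) θ', ← char_map_eq P _ (hmarg W hW v) θ', hmapeq]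
  -- Fact 1 : IDT for X
  have hsumX : Measurable (fun ω : Fin n → Ω => (fun i => ∑ j, X (t i) (ω j))) :=
    measurable_pi_lambda _ fun i =>
      Finset.measurable_sum _ fun j _ => (hXmeas _).comp (measurable_pi_apply j)
  have fact1 : ∀ θ', φ X s θ' = (φ X t θ') ^ n := by
    intro θ'
    have hmapeq := hIDT n hn m t ht
    have h1 : φ X s θ' = charFn ((Measure.pi fun _ : Fin n => P).map
        fun ω i => ∑ j, X (t i) (ω j)) θ' := by
      rw [hφdef]; simp only []
      rw [← char_map_eq P _ (hmarg X hXmeas s) θ']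
      exact congrArg (fun μ => charFn μ θ') hmapeq
    rw [h1, char_map_eq (Measure.pi fun _ : Fin n => P)
      (fun ω i => ∑ j, X (t i) (ω j)) hsumX θ']
    exact char_pi_sum P (fun i => X (t i)) (fun i => hXmeas _) θ'
  -- Fact 2 : decomposition + independence
  have fact2 : ∀ (u : Fin m → ℝ), (∀ i, 0 ≤ u i) → ∀ θ',
      φ X u θ' = (φ (fun v ω => c * X' v ω) u θ') * φ U u θ' := by
    intro u hu θ'
    have hd := hdecomp m u hu
    have h1 : φ X u θ' = ∫ ω, cf θ' (fun i => c * X' (u i) ω + U (u i) ω) ∂P :=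
      hchar_of_map X (fun v ω => c * X' v ω + U v ω) hXmeas
        (fun v => ((hX'meas v).const_mul c).add (hUmeas v)) u u hd θ'
    rw [h1]
    have hsplit : ∀ ω, cf θ' (fun i => c * X' (u i) ω + U (u i) ω)
        = cf (fun k => c * θ' k) (fun i => X' (u i) ω) * cf θ' (fun i => U (u i) ω) :=
      fun ω => cf_split θ' c (fun i => X' (u i) ω) (fun i => U (u i) ω)
    simp_rw [hsplit]
    -- independence of the marginal vectors
    have hproj : Measurable fun p : ℝ → ℝ => (fun i => p (u i)) :=
      measurable_pi_lambda _ fun i => measurable_pi_apply _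
    have hindep2 : IndepFun (fun ω => (fun i => X' (u i) ω))
        (fun ω => (fun i => U (u i) ω)) P := hindep.comp hproj hproj
    have hmul := indep_integral_mul P (hmarg X' hX'meas u) (hmarg U hUmeas u) hindep2
      (cf (fun k => c * θ' k)) (cf θ')
      (cf_cont_comp continuous_const continuous_id)
      (cf_cont_comp continuous_const continuous_id)
    rw [hmul]
    congr 1
    -- rewrite Ψ in the `c *` form
    rw [hφdef]; simp only []
    refine integral_congr_ae (Eventually.of_forall fun ω => ?_)
    exact (cf_scale θ' c (fun i => X' (u i) ω)).symm
  -- Fact 3 : copy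
  have fact3 : ∀ (u : Fin m → ℝ), (∀ i, 0 ≤ u i) → ∀ θ', φ X' u θ' = φ X u θ' :=
    fun u hu θ' => hchar_of_map X' X hX'meas hXmeas u u (hcopy m u hu) θ'
  -- Ψ notation
  set Ψ : (Fin m → ℝ) → (Fin m → ℝ) → ℂ :=
    fun u θ' => φ (fun v ω => c * X' v ω) u θ' with hΨdef
  have hψχ : ∀ (u : Fin m → ℝ) θ', Ψ u θ' = φ X' u (fun k => c * θ' k) := by
    intro u θ'
    rw [hΨdef, hφdef]
    simp only []
    refine integral_congr_ae (Eventually.of_forall fun ω => ?_)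
    exact cf_scale θ' c (fun i => X' (u i) ω)
  -- nonvanishing
  have fact4 : Ψ s θ ≠ 0 := by
    have heq : (∫ ω, Complex.exp (Complex.I * ∑ k, (θ k : ℂ) * ((c * X' (s k) ω : ℝ) : ℂ)) ∂P)
        = Ψ s θ := by
      rw [hΨdef, hφdef]
      simp only []
      refine integral_congr_ae (Eventually.of_forall fun ω => ?_)
      exact hn_form θ (fun i => X' (s i) ω) c
    exact fun hzero => hnonvanish m s θ hs (heq.trans hzero)
  -- scaling identity for Ψ
  have fact5 : Ψ s θ = (Ψ t θ) ^ n := by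
    rw [hψχ s θ, hψχ t θ, fact3 s hs _, fact3 t ht _]
    exact fact1 _
  -- main computation
  have key : φ U s θ = (φ U t θ) ^ n := by
    have e1 : Ψ s θ * φ U s θ = (Ψ t θ * φ U t θ) ^ n := by
      rw [← fact2 s hs θ, ← fact2 t ht θ]
      exact fact1 θ
    rw [mul_pow, ← fact5] at e1
    exact mul_left_cancel₀ fact4 e1
  -- translate back to the measures
  rw [char_map_eq P _ (hmarg U hUmeas s) θ, char_map_eq _ _ hsum θ,
    char_pi_sum P (fun i => U (t i)) (fun i => hUmeas _) θ]
  exact key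
end
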